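/- (Hoeffding's inequality for U-statistics, order m = 2.) Let X₁,…,X_n be i.i.d. with distribution P, and h : X × X → ℝ a symmetric measurable function with a ≤ h ≤ b. Let θ = E[h(X₁,X₂)] and U_n = (1/C(n,2)) ∑_{i<j} h(X_i, X_j). Then for any u > 0 and n ≥ 2, P(U_n − θ ≥ u) ≤ exp(−2⌊n/2⌋u²/(b−a)²), and in particular P(|U_n − θ| ≥ u) ≤ 2 exp(−2⌊n/2⌋u²/(b−a)²). -/

import Mathlib

open MeasureTheory ProbabilityTheory
open scoped BigOperators

open Real Finset in

lemma hoeff_analytic_core (p : ℝ) (hp0 : 0 ≤ p) (hp1 : p ≤ 1) (s : ℝ) :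
    (1 - p) + p * Real.exp s ≤ Real.exp (p * s + s ^ 2 / 8) := by
  set D : ℝ → ℝ := fun x => 1 - p + p * Real.exp x with hDdef
  have hD : ∀ x, 0 < D x := by
    intro x
    rcases eq_or_lt_of_le hp0 with h0 | h0
    · simp only [hDdef, ← h0]; norm_num
    · have : 0 < p * Real.exp x := mul_pos h0 (Real.exp_pos x)
      simp only [hDdef]; linarith
  -- g x = p*x + x^2/8 - log (D x), show g s ≥ 0
  set g : ℝ → ℝ := fun x => p * x + x ^ 2 / 8 - Real.log (D x) with hgdef
  set g' : ℝ → ℝ := fun x => p + x / 4 - p * Real.exp x / D x with hg'def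
  have hDd : ∀ x, HasDerivAt D (p * Real.exp x) x := by
    intro x
    exact (((Real.hasDerivAt_exp x).const_mul p).const_add (1 - p))
  have hgd : ∀ x, HasDerivAt g (g' x) x := by
    intro x
    have hlog : HasDerivAt (fun x => Real.log (D x)) (p * Real.exp x / D x) x :=
      (hDd x).log (hD x).ne'
    have h1 : HasDerivAt (fun x : ℝ => p * x + x ^ 2 / 8) (p + x * 2 / 8) x := by
      have := ((hasDerivAt_id x).const_mul p).add
        (((hasDerivAt_pow 2 x)).div_const 8)
      exact this.congr_deriv (by rw [show (2:ℕ) - 1 = 1 from rfl]; push_cast; ring)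
    have := h1.sub hlog
    exact this.congr_deriv (by simp only [hg'def]; ring)
  have hg'd : ∀ x, HasDerivAt g' (1 / 4 - (1 - p) * (p * Real.exp x) / (D x) ^ 2) x := by
    intro x
    have hq : HasDerivAt (fun x => p * Real.exp x / D x)
        ((p * Real.exp x * D x - p * Real.exp x * (p * Real.exp x)) / (D x) ^ 2) x :=
      ((Real.hasDerivAt_exp x).const_mul p).div (hDd x) (hD x).ne'
    have h1 : HasDerivAt (fun x : ℝ => p + x / 4) (1 / 4) x := by
      simpa using ((hasDerivAt_id x).div_const 4).const_add p
    have hh := h1.sub hq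
    have : p * Real.exp x * D x - p * Real.exp x * (p * Real.exp x)
        = (1 - p) * (p * Real.exp x) := by simp only [hDdef]; ring
    rw [this] at hh; exact hh
  have hg'' : ∀ x, 0 ≤ 1 / 4 - (1 - p) * (p * Real.exp x) / (D x) ^ 2 := by
    intro x
    rw [sub_nonneg, div_le_iff₀ (pow_pos (hD x) 2)]
    have h1 : 0 ≤ 1 - p := by linarith
    have h2 : 0 ≤ p * Real.exp x := mul_nonneg hp0 (Real.exp_pos x).le
    have hDx : D x = (1 - p) + p * Real.exp x := rfl
    nlinarith [sq_nonneg ((1 - p) - p * Real.exp x)]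
  have hg'mono : Monotone g' :=
    monotone_of_deriv_nonneg (fun x => (hg'd x).differentiableAt)
      (fun x => by rw [(hg'd x).deriv]; exact hg'' x)
  have hg'0 : g' 0 = 0 := by
    simp only [hg'def, hDdef]
    simp [Real.exp_zero]
  have hgcont : Continuous g := by
    have : Differentiable ℝ g := fun x => (hgd x).differentiableAt
    exact this.continuous
  have hg0 : g 0 = 0 := by simp [hgdef, hDdef, Real.exp_zero]
  have key : 0 ≤ g s := by
    rcases le_or_gt 0 s with hs | hs
    · have hmono : MonotoneOn g (Set.Ici 0) := by
        apply monotoneOn_of_deriv_nonneg (convex_Ici 0) hgcont.continuousOn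
        · intro x _; exact (hgd x).differentiableAt.differentiableWithinAt
        · intro x hx
          rw [interior_Ici] at hx
          rw [(hgd x).deriv]
          have := hg'mono (le_of_lt hx)
          rw [hg'0] at this; exact this
      have := hmono (Set.self_mem_Ici) (Set.mem_Ici.2 hs) hs
      rw [hg0] at this; exact this
    · have hmono : AntitoneOn g (Set.Iic 0) := by
        apply antitoneOn_of_deriv_nonpos (convex_Iic 0) hgcont.continuousOn
        · intro x _; exact (hgd x).differentiableAt.differentiableWithinAt
        · intro x hx
          rw [interior_Iic] at hx
          rw [(hgd x).deriv]
          have := hg'mono (le_of_lt hx)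
          rw [hg'0] at this; exact this
      have := hmono (Set.mem_Iic.2 hs.le) (Set.self_mem_Iic) hs.le
      rw [hg0] at this; exact this
  have hlog : Real.log (D s) ≤ p * s + s ^ 2 / 8 := by
    simp only [hgdef] at key; linarith
  calc (1 - p) + p * Real.exp s = D s := rfl
    _ = Real.exp (Real.log (D s)) := (Real.exp_log (hD s)).symm
    _ ≤ Real.exp (p * s + s ^ 2 / 8) := Real.exp_le_exp.mpr hlog


open Real Finset in
lemma integrable_of_abs_le {Ω : Type*} [MeasurableSpace Ω] {P : Measure Ω}
    [IsFiniteMeasure P] {f : Ω → ℝ} (hf : AEStronglyMeasurable f P) (C : ℝ)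
    (hC : ∀ ω, |f ω| ≤ C) : Integrable f P :=
  (integrable_const C).mono' hf (ae_of_all _ fun ω => by simpa using hC ω)


open Real Finset in
lemma nonempty_of_prob {Ω : Type*} [MeasurableSpace Ω] (P : Measure Ω)
    [IsProbabilityMeasure P] : Nonempty Ω := by
  rcases isEmpty_or_nonempty Ω with hΩ | hΩ
  · exfalso
    have h1 := measure_univ (μ := P)
    rw [Set.univ_eq_empty_iff.mpr hΩ, measure_empty] at h1
    exact zero_ne_one h1
  · exact hΩ


open Real Finset in
lemma hoeffding_lemma {Ω : Type*} [MeasurableSpace Ω] (P : Measure Ω)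
    [IsProbabilityMeasure P] {Y : Ω → ℝ} (hYm : Measurable Y) {a b : ℝ}
    (hY : ∀ ω, a ≤ Y ω ∧ Y ω ≤ b) (t : ℝ) :
    mgf Y P t ≤ Real.exp (t * (∫ ω, Y ω ∂P) + t ^ 2 * (b - a) ^ 2 / 8) := by
  have hne : Nonempty Ω := nonempty_of_prob P
  obtain ⟨ω₀⟩ := hne
  have hab : a ≤ b := le_trans (hY ω₀).1 (hY ω₀).2
  set m : ℝ := ∫ ω, Y ω ∂P with hm
  have hYint : Integrable Y P :=
    integrable_of_abs_le hYm.aestronglyMeasurable (max |a| |b|) (fun ω =>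
      abs_le.2 ⟨le_trans (neg_le_neg (le_max_left |a| |b|)) (le_trans (neg_abs_le a) (hY ω).1),
        le_trans (hY ω).2 (le_trans (le_abs_self b) (le_max_right _ _))⟩)
  have hma : a ≤ m := by
    rw [hm]
    calc a = ∫ _ω, a ∂P := by simp
      _ ≤ ∫ ω, Y ω ∂P := integral_mono (integrable_const a) hYint (fun ω => (hY ω).1)
  have hmb : m ≤ b := by
    rw [hm]
    calc ∫ ω, Y ω ∂P ≤ ∫ _ω, b ∂P := integral_mono hYint (integrable_const b) (fun ω => (hY ω).2)
      _ = b := by simp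
  rcases eq_or_lt_of_le hab with hab' | hab'
  · -- a = b: Y is constant
    have hYc : ∀ ω, Y ω = a := fun ω => le_antisymm (hab' ▸ (hY ω).2) (hY ω).1
    have hmeq : m = a := by rw [hm]; simp only [hYc]; simp
    have : mgf Y P t = Real.exp (t * a) := by
      have : Y = fun _ => a := funext hYc
      rw [this, mgf_const]
    rw [this, hmeq]
    exact Real.exp_le_exp.mpr (by nlinarith [sq_nonneg t, sq_nonneg (b - a)])
  · have hba : (0:ℝ) < b - a := sub_pos.2 hab'
    set p : ℝ := (m - a) / (b - a) with hp
    have hp0 : 0 ≤ p := div_nonneg (by linarith) hba.le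
    have hp1 : p ≤ 1 := (div_le_one hba).2 (by linarith)
    -- pointwise convexity bound
    have hpt : ∀ ω, Real.exp (t * Y ω) ≤
        (b - Y ω) / (b - a) * Real.exp (t * a) + (Y ω - a) / (b - a) * Real.exp (t * b) := by
      intro ω
      have h1 : (0:ℝ) ≤ (b - Y ω) / (b - a) := div_nonneg (by linarith [(hY ω).2]) hba.le
      have h2 : (0:ℝ) ≤ (Y ω - a) / (b - a) := div_nonneg (by linarith [(hY ω).1]) hba.le
      have h3 : (b - Y ω) / (b - a) + (Y ω - a) / (b - a) = 1 := by
        field_simp; ring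
      have := convexOn_exp.2 (Set.mem_univ (t * a)) (Set.mem_univ (t * b)) h1 h2 h3
      simp only [smul_eq_mul] at this
      have harg : (b - Y ω) / (b - a) * (t * a) + (Y ω - a) / (b - a) * (t * b) = t * Y ω := by
        field_simp; ring
      rw [harg] at this
      exact this
    have hint1 : Integrable (fun ω => Real.exp (t * Y ω)) P :=
      integrable_of_abs_le (Real.measurable_exp.comp (hYm.const_mul t)).aestronglyMeasurable (Real.exp (|t| * max |a| |b|)) (fun ω => by
        rw [abs_of_pos (Real.exp_pos _)]
        apply Real.exp_le_exp.mpr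
        calc t * Y ω ≤ |t * Y ω| := le_abs_self _
          _ = |t| * |Y ω| := abs_mul t (Y ω)
          _ ≤ |t| * max |a| |b| := by
            apply mul_le_mul_of_nonneg_left _ (abs_nonneg t)
            rcases abs_le.2 ⟨le_trans (neg_le_neg (le_max_left |a| |b|))
              (le_trans (neg_abs_le a) (hY ω).1),
              le_trans (hY ω).2 (le_trans (le_abs_self b) (le_max_right _ _))⟩ with h
            exact h)
    have hint2 : Integrable (fun ω =>
        (b - Y ω) / (b - a) * Real.exp (t * a) + (Y ω - a) / (b - a) * Real.exp (t * b)) P := by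
      apply Integrable.add
      · exact ((((integrable_const b).sub hYint).div_const (b - a)).mul_const _)
      · exact (((hYint.sub (integrable_const a)).div_const (b - a)).mul_const _)
    have hmgf : mgf Y P t ≤ (b - m) / (b - a) * Real.exp (t * a)
        + (m - a) / (b - a) * Real.exp (t * b) := by
      have h1 : mgf Y P t = ∫ ω, Real.exp (t * Y ω) ∂P := rfl
      rw [h1]
      calc ∫ ω, Real.exp (t * Y ω) ∂P
          ≤ ∫ ω, ((b - Y ω) / (b - a) * Real.exp (t * a)
            + (Y ω - a) / (b - a) * Real.exp (t * b)) ∂P :=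
            integral_mono hint1 hint2 hpt
        _ = (b - m) / (b - a) * Real.exp (t * a) + (m - a) / (b - a) * Real.exp (t * b) := by
            have i1 : Integrable (fun ω => (b - Y ω) / (b - a) * Real.exp (t * a)) P := by
              exact ((((integrable_const b).sub hYint).div_const (b - a)).mul_const _)
            have i2 : Integrable (fun ω => (Y ω - a) / (b - a) * Real.exp (t * b)) P := by
              exact (((hYint.sub (integrable_const a)).div_const (b - a)).mul_const _)
            have ib : ∫ ω, (b - Y ω) ∂P = b - m := by
              rw [hm, integral_sub (integrable_const b) hYint]; simp
            have ia : ∫ ω, (Y ω - a) ∂P = m - a := by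
              rw [hm, integral_sub hYint (integrable_const a)]; simp
            rw [integral_add i1 i2, integral_mul_const, integral_mul_const,
              integral_div, integral_div, ia, ib]
    have hcore := hoeff_analytic_core p hp0 hp1 (t * (b - a))
    calc mgf Y P t ≤ (b - m) / (b - a) * Real.exp (t * a)
          + (m - a) / (b - a) * Real.exp (t * b) := hmgf
      _ = Real.exp (t * a) * ((1 - p) + p * Real.exp (t * (b - a))) := by
          rw [hp]
          have hexp : Real.exp (t * b) = Real.exp (t * a) * Real.exp (t * (b - a)) := by
            rw [← Real.exp_add, show t * a + t * (b - a) = t * b by ring]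
          rw [hexp]
          have h1p : 1 - (m - a) / (b - a) = (b - m) / (b - a) := by field_simp; ring
          rw [h1p]; ring
      _ ≤ Real.exp (t * a) * Real.exp (p * (t * (b - a)) + (t * (b - a)) ^ 2 / 8) :=
          mul_le_mul_of_nonneg_left hcore (Real.exp_pos _).le
      _ = Real.exp (t * a + (p * (t * (b - a)) + (t * (b - a)) ^ 2 / 8)) := by
          rw [← Real.exp_add]
      _ = Real.exp (t * m + t ^ 2 * (b - a) ^ 2 / 8) := by
          congr 1
          have : p * (t * (b - a)) = t * (m - a) := by
            rw [hp]; field_simp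
          rw [this]; ring


open Real Finset in
lemma measurable_h_comp {E β : Type*} [MeasurableSpace E] [MeasurableSpace β]
    {h : E → E → ℝ} (hhm : Measurable (Function.uncurry h)) {f g : β → E}
    (hf : Measurable f) (hg : Measurable g) : Measurable fun v => h (f v) (g v) :=
  hhm.comp (hf.prodMk hg)


open Real Finset in
lemma mgf_sum_blocks {Ω E : Type*} [MeasurableSpace Ω] [MeasurableSpace E]
    (P : Measure Ω) [IsProbabilityMeasure P] (X : ℕ → Ω → E) (hXm : ∀ i, Measurable (X i))
    (hindep : iIndepFun X P)
    (h : E → E → ℝ) (hhm : Measurable (Function.uncurry h))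
    (p q : ℕ → ℕ) (k : ℕ)
    (hdisj : ∀ i < k, ∀ j < k, i ≠ j →
      p i ≠ p j ∧ p i ≠ q j ∧ q i ≠ p j ∧ q i ≠ q j) (t : ℝ) :
    mgf (fun ω => ∑ i ∈ Finset.range k, h (X (p i) ω) (X (q i) ω)) P t
      = ∏ i ∈ Finset.range k, mgf (fun ω => h (X (p i) ω) (X (q i) ω)) P t := by
  classical
  induction k with
  | zero => simp [mgf_const]
  | succ k ih =>
    have hterm_meas : ∀ i, Measurable (fun ω => h (X (p i) ω) (X (q i) ω)) := fun i =>
      hhm.comp ((hXm (p i)).prodMk (hXm (q i)))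
    set A : Ω → ℝ := fun ω => ∑ i ∈ Finset.range k, h (X (p i) ω) (X (q i) ω) with hA
    set B : Ω → ℝ := fun ω => h (X (p k) ω) (X (q k) ω) with hB
    have hAm : Measurable A := by
      apply Finset.measurable_sum
      intro i _; exact hterm_meas i
    have hBm : Measurable B := hterm_meas k
    -- independence of A and B
    set S : Finset ℕ := (Finset.range k).image p ∪ (Finset.range k).image q with hS
    set T : Finset ℕ := {p k, q k} with hT
    have hST : Disjoint S T := by
      rw [Finset.disjoint_left]
      intro x hxS hxT
      rw [hS, Finset.mem_union] at hxS
      rw [hT, Finset.mem_insert, Finset.mem_singleton] at hxT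
      rcases hxS with hx | hx <;> rw [Finset.mem_image] at hx <;>
        obtain ⟨i, hi, rfl⟩ := hx <;> rw [Finset.mem_range] at hi <;>
        have hd := hdisj i (Nat.lt_succ_of_lt hi) k (Nat.lt_succ_self k)
          (Nat.ne_of_lt hi) <;>
        rcases hxT with hx' | hx' <;> tauto
    have hIndST := hindep.indepFun_finset S T hST hXm
    set F : (∀ _i : S, E) → ℝ := fun v =>
      ∑ i ∈ (Finset.range k).attach,
        h (v ⟨p i.1, by
          rw [hS, Finset.mem_union]
          exact Or.inl (Finset.mem_image_of_mem p i.2)⟩)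
          (v ⟨q i.1, by
          rw [hS, Finset.mem_union]
          exact Or.inr (Finset.mem_image_of_mem q i.2)⟩) with hF
    set G : (∀ _i : T, E) → ℝ := fun v =>
      h (v ⟨p k, by rw [hT]; exact Finset.mem_insert_self _ _⟩)
        (v ⟨q k, by rw [hT]; exact Finset.mem_insert_of_mem (Finset.mem_singleton_self _)⟩)
      with hG
    have hFm : Measurable F := by
      rw [hF]
      apply Finset.measurable_sum
      intro i _
      exact measurable_h_comp hhm (measurable_pi_apply _) (measurable_pi_apply _)
    have hGm : Measurable G := by
      rw [hG]
      exact measurable_h_comp hhm (measurable_pi_apply _) (measurable_pi_apply _)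
    have hAeq : A = fun ω => F (fun i : S => X i ω) := by
      funext ω
      rw [hA, hF]
      simp only
      rw [← Finset.sum_attach (Finset.range k) (fun i => h (X (p i) ω) (X (q i) ω))]
    have hBeq : B = fun ω => G (fun i : T => X i ω) := by
      funext ω; rw [hB, hG]
    have hABindep : IndepFun A B P := by
      rw [hAeq, hBeq]
      exact hIndST.comp hFm hGm
    have hsum : (fun ω => ∑ i ∈ Finset.range (k + 1), h (X (p i) ω) (X (q i) ω)) = A + B := by
      funext ω
      simp only [Finset.sum_range_succ, hA, hB, Pi.add_apply]
    rw [hsum, hABindep.mgf_add' hAm.aestronglyMeasurable hBm.aestronglyMeasurable,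
      Finset.prod_range_succ, ← hB]
    congr 1
    exact ih (fun i hi j hj hij => hdisj i (Nat.lt_succ_of_lt hi) j (Nat.lt_succ_of_lt hj) hij)


open Real Finset in
lemma exists_perm_two {n : ℕ} (s s' p q : Fin n) (hss' : s ≠ s') (hpq : p ≠ q) :
    ∃ τ : Equiv.Perm (Fin n), τ s = p ∧ τ s' = q := by
  classical
  set w1 := Equiv.swap s p with hw1
  set q' := w1 q with hq'
  have hq's : q' ≠ s := by
    intro hcon
    have h1 : q = w1 s := by
      have := congrArg w1 hcon
      rwa [hq', Equiv.swap_apply_self] at this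
    rw [hw1, Equiv.swap_apply_left] at h1
    exact hpq h1.symm
  set w2 := Equiv.swap s' q' with hw2
  refine ⟨w2.trans w1, ?_, ?_⟩
  · have h2 : w2 s = s := Equiv.swap_apply_of_ne_of_ne hss' (Ne.symm hq's)
    simp only [Equiv.trans_apply, h2, hw1, Equiv.swap_apply_left]
  · have h2 : w2 s' = q' := Equiv.swap_apply_left _ _
    simp only [Equiv.trans_apply, h2, hq', hw1, Equiv.swap_apply_self]


open Real Finset in
lemma perm_pair_sum (n : ℕ) (hn : 2 ≤ n) :
    ∃ N : ℕ, N * (n * (n - 1)) = n.factorial ∧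
      ∀ (s s' : Fin n), s ≠ s' → ∀ F : Fin n → Fin n → ℝ,
        ∑ σ : Equiv.Perm (Fin n), F (σ s) (σ s')
          = (N : ℝ) * ∑ b ∈ Finset.univ.offDiag, F b.1 b.2 := by
  classical
  have h0 : (0 : ℕ) < n := by omega
  have h1 : (1 : ℕ) < n := by omega
  set s₀ : Fin n := ⟨0, h0⟩ with hs₀
  set s₁ : Fin n := ⟨1, h1⟩ with hs₁
  have hs01 : s₀ ≠ s₁ := by
    intro hcon
    have := congrArg Fin.val hcon
    simp [hs₀, hs₁] at this
  set N : ℕ := (Finset.univ.filter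
    (fun σ : Equiv.Perm (Fin n) => σ s₀ = s₀ ∧ σ s₁ = s₁)).card with hN
  -- all fibers have card N
  have fib : ∀ (s s' : Fin n), s ≠ s' → ∀ (p q : Fin n), p ≠ q →
      (Finset.univ.filter (fun σ : Equiv.Perm (Fin n) => σ s = p ∧ σ s' = q)).card = N := by
    intro s s' hss' p q hpq
    obtain ⟨τa, hτa1, hτa2⟩ := exists_perm_two s₀ s₁ s s' hs01 hss'
    obtain ⟨τb, hτb1, hτb2⟩ := exists_perm_two s₀ s₁ p q hs01 hpq
    rw [hN]
    apply Finset.card_bij' (i := fun σ _ => τb⁻¹ * σ * τa) (j := fun ρ _ => τb * ρ * τa⁻¹)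
    · intro σ hσ
      rw [Finset.mem_filter] at hσ ⊢
      obtain ⟨-, h1', h2'⟩ := hσ
      refine ⟨Finset.mem_univ _, ?_, ?_⟩
      · simp only [Equiv.Perm.mul_apply, hτa1, h1', ← hτb1, Equiv.Perm.coe_inv, Equiv.symm_apply_apply]
      · simp only [Equiv.Perm.mul_apply, hτa2, h2', ← hτb2, Equiv.Perm.coe_inv, Equiv.symm_apply_apply]
    · intro ρ hρ
      rw [Finset.mem_filter] at hρ ⊢
      obtain ⟨-, h1', h2'⟩ := hρ
      refine ⟨Finset.mem_univ _, ?_, ?_⟩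
      · simp only [Equiv.Perm.mul_apply, ← hτa1, Equiv.Perm.coe_inv, Equiv.symm_apply_apply, h1', hτb1]
      · simp only [Equiv.Perm.mul_apply, ← hτa2, Equiv.Perm.coe_inv, Equiv.symm_apply_apply, h2', hτb2]
    · intro σ _; group
    · intro ρ _; group
  have hmaps : ∀ σ : Equiv.Perm (Fin n), σ ∈ (Finset.univ : Finset (Equiv.Perm (Fin n))) →
      (σ s₀, σ s₁) ∈ (Finset.univ : Finset (Fin n)).offDiag := by
    intro σ _
    rw [Finset.mem_offDiag]
    exact ⟨Finset.mem_univ _, Finset.mem_univ _, fun hcon => hs01 (σ.injective hcon)⟩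
  refine ⟨N, ?_, ?_⟩
  · -- counting
    have hcard := Finset.card_eq_sum_card_fiberwise hmaps
    have hfib : ∀ b ∈ (Finset.univ : Finset (Fin n)).offDiag,
        (Finset.univ.filter (fun σ : Equiv.Perm (Fin n) => (σ s₀, σ s₁) = b)).card = N := by
      intro b hb
      rw [Finset.mem_offDiag] at hb
      rw [← fib s₀ s₁ hs01 b.1 b.2 hb.2.2]
      congr 1
      ext σ
      simp [Prod.ext_iff]
    rw [Finset.sum_congr rfl hfib, Finset.sum_const, smul_eq_mul, Finset.offDiag_card] at hcard
    have huniv : (Finset.univ : Finset (Equiv.Perm (Fin n))).card = n.factorial := by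
      rw [Finset.card_univ, Fintype.card_perm, Fintype.card_fin]
    rw [huniv] at hcard
    rw [hcard, Finset.card_univ, Fintype.card_fin]
    have : n * n - n = n * (n - 1) := by
      cases n with
      | zero => simp
      | succ m => rw [Nat.succ_sub_one, Nat.mul_succ, Nat.add_sub_cancel]
    rw [this, mul_comm]
  · intro s s' hss' F
    have hmaps' : ∀ σ : Equiv.Perm (Fin n), σ ∈ (Finset.univ : Finset (Equiv.Perm (Fin n))) →
        (σ s, σ s') ∈ (Finset.univ : Finset (Fin n)).offDiag := by
      intro σ _
      rw [Finset.mem_offDiag]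
      exact ⟨Finset.mem_univ _, Finset.mem_univ _, fun hcon => hss' (σ.injective hcon)⟩
    rw [← Finset.sum_fiberwise_of_maps_to hmaps' (fun σ => F (σ s) (σ s'))]
    rw [Finset.mul_sum]
    apply Finset.sum_congr rfl
    intro b hb
    rw [Finset.mem_offDiag] at hb
    have : ∀ σ ∈ Finset.univ.filter
        (fun σ : Equiv.Perm (Fin n) => (σ s, σ s') = b), F (σ s) (σ s') = F b.1 b.2 := by
      intro σ hσ
      rw [Finset.mem_filter] at hσ
      rw [← hσ.2]
    rw [Finset.sum_congr rfl this, Finset.sum_const]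
    have hset : Finset.univ.filter (fun σ : Equiv.Perm (Fin n) => (σ s, σ s') = b)
        = Finset.univ.filter (fun σ : Equiv.Perm (Fin n) => σ s = b.1 ∧ σ s' = b.2) := by
      ext σ; simp [Prod.ext_iff]
    rw [hset, fib s s' hss' b.1 b.2 hb.2.2, nsmul_eq_mul]


open Real Finset in
lemma square_split (n : ℕ) (g : ℕ → ℕ → ℝ) (hsym : ∀ i j, g i j = g j i) :
    ∑ i ∈ Finset.range n, ∑ j ∈ Finset.range n, g i j
      = 2 * (∑ j ∈ Finset.range n, ∑ i ∈ Finset.range j, g i j)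
        + ∑ i ∈ Finset.range n, g i i := by
  induction n with
  | zero => simp
  | succ m ih =>
    rw [Finset.sum_range_succ, Finset.sum_range_succ (fun j => ∑ i ∈ Finset.range j, g i j),
      Finset.sum_range_succ (fun i => g i i)]
    have e1 : ∑ i ∈ Finset.range m, ∑ j ∈ Finset.range (m + 1), g i j
        = (∑ i ∈ Finset.range m, ∑ j ∈ Finset.range m, g i j)
          + ∑ i ∈ Finset.range m, g i m := by
      rw [← Finset.sum_add_distrib]
      apply Finset.sum_congr rfl
      intro i _
      rw [Finset.sum_range_succ]
    have e2 : ∑ j ∈ Finset.range (m + 1), g m j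
        = (∑ j ∈ Finset.range m, g j m) + g m m := by
      rw [Finset.sum_range_succ]
      congr 1
      exact Finset.sum_congr rfl (fun j _ => hsym m j)
    rw [e1, e2, ih]
    ring


open Real Finset in
lemma offDiag_sum_eq (n : ℕ) (g : ℕ → ℕ → ℝ) (hsym : ∀ i j, g i j = g j i) :
    ∑ b ∈ (Finset.univ : Finset (Fin n)).offDiag, g (b.1 : ℕ) (b.2 : ℕ)
      = 2 * ∑ j ∈ Finset.range n, ∑ i ∈ Finset.range j, g i j := by
  classical
  have hsplit : ∑ b ∈ (Finset.univ : Finset (Fin n)).diag, g (b.1 : ℕ) (b.2 : ℕ)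
      + ∑ b ∈ (Finset.univ : Finset (Fin n)).offDiag, g (b.1 : ℕ) (b.2 : ℕ)
      = ∑ b ∈ (Finset.univ : Finset (Fin n)) ×ˢ (Finset.univ : Finset (Fin n)), g (b.1 : ℕ) (b.2 : ℕ) := by
    rw [← Finset.sum_union (Finset.disjoint_diag_offDiag _), Finset.diag_union_offDiag]
  have hdiag : ∑ b ∈ (Finset.univ : Finset (Fin n)).diag, g (b.1 : ℕ) (b.2 : ℕ)
      = ∑ i ∈ Finset.range n, g i i := by
    rw [Finset.sum_diag]
    exact Fin.sum_univ_eq_sum_range (fun i => g i i) n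
  have hprod : ∑ b ∈ (Finset.univ : Finset (Fin n)) ×ˢ (Finset.univ : Finset (Fin n)), g (b.1 : ℕ) (b.2 : ℕ)
      = ∑ i ∈ Finset.range n, ∑ j ∈ Finset.range n, g i j := by
    rw [Finset.sum_product' (f := fun (p q : Fin n) => g (p : ℕ) (q : ℕ))]
    rw [← Fin.sum_univ_eq_sum_range (fun i => ∑ j ∈ Finset.range n, g i j) n]
    apply Finset.sum_congr rfl
    intro p _
    exact Fin.sum_univ_eq_sum_range (fun j => g (p : ℕ) j) n
  have hsq := square_split n g hsym
  linarith


open Real Finset in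
lemma mean_h_eq {Ω E : Type*} [MeasurableSpace Ω] [MeasurableSpace E]
    (P : Measure Ω) [IsProbabilityMeasure P] (X : ℕ → Ω → E) (hXm : ∀ i, Measurable (X i))
    (hindep : iIndepFun X P)
    (ν : Measure E) (hid : ∀ i, P.map (X i) = ν)
    (h : E → E → ℝ) (hhm : Measurable (Function.uncurry h))
    (a b : ℝ) (hab : ∀ x y, a ≤ h x y ∧ h x y ≤ b)
    (p q : ℕ) (hpq : p ≠ q) :
    ∫ ω, h (X p ω) (X q ω) ∂P = ∫ x, ∫ y, h x y ∂ν ∂ν := by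
  have hν : IsProbabilityMeasure ν := by
    rw [← hid 0]; exact Measure.isProbabilityMeasure_map (hXm 0).aemeasurable
  have hind : IndepFun (X p) (X q) P := hindep.indepFun hpq
  have hmap : Measure.map (fun ω => (X p ω, X q ω)) P = ν.prod ν := by
    rw [(indepFun_iff_map_prod_eq_prod_map_map (hXm p).aemeasurable
      (hXm q).aemeasurable).mp hind, hid p, hid q]
  have hK : ∀ z : E × E, |Function.uncurry h z| ≤ max |a| |b| := by
    intro z
    rcases hab z.1 z.2 with ⟨h1, h2⟩
    rw [abs_le]
    constructor
    · exact le_trans (neg_le_neg (le_max_left |a| |b|)) (le_trans (neg_abs_le a) h1)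
    · exact le_trans h2 (le_trans (le_abs_self b) (le_max_right _ _))
  have hint : Integrable (Function.uncurry h) (ν.prod ν) :=
    integrable_of_abs_le hhm.aestronglyMeasurable _ hK
  calc ∫ ω, h (X p ω) (X q ω) ∂P
      = ∫ z, Function.uncurry h z ∂(Measure.map (fun ω => (X p ω, X q ω)) P) := by
        rw [integral_map ((hXm p).prodMk (hXm q)).aemeasurable hhm.aestronglyMeasurable]
        rfl
    _ = ∫ z, Function.uncurry h z ∂(ν.prod ν) := by rw [hmap]
    _ = ∫ x, ∫ y, h x y ∂ν ∂ν := by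
        rw [integral_prod _ hint]
        rfl


open Real Finset in
lemma abs_le_K {a b : ℝ} {v : ℝ} (h1 : a ≤ v) (h2 : v ≤ b) : |v| ≤ max |a| |b| :=
  abs_le.2 ⟨le_trans (neg_le_neg (le_max_left |a| |b|)) (le_trans (neg_abs_le a) h1),
    le_trans h2 (le_trans (le_abs_self b) (le_max_right _ _))⟩


open Real Finset in
lemma hoeffding_ustat_onesided
    {Ω E : Type*} [MeasurableSpace Ω] [MeasurableSpace E]
    (P : Measure Ω) [IsProbabilityMeasure P]
    (X : ℕ → Ω → E) (hXm : ∀ i, Measurable (X i))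
    (hindep : iIndepFun X P)
    (ν : Measure E) (hid : ∀ i, P.map (X i) = ν)
    (h : E → E → ℝ) (hhm : Measurable (Function.uncurry h))
    (hsymm : ∀ x y, h x y = h y x)
    (a b : ℝ) (hab : ∀ x y, a ≤ h x y ∧ h x y ≤ b)
    (θ : ℝ) (hθ : θ = ∫ x, ∫ y, h x y ∂ν ∂ν)
    (n : ℕ) (hn : 2 ≤ n) (u : ℝ) (hu : 0 < u) :
    P {ω | u ≤ (1 / (n.choose 2 : ℝ)) *
          (∑ j ∈ Finset.range n, ∑ i ∈ Finset.range j, h (X i ω) (X j ω)) - θ}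
      ≤ ENNReal.ofReal (Real.exp (-2 * ((n / 2 : ℕ) : ℝ) * u ^ 2 / (b - a) ^ 2)) := by
  classical
  obtain ⟨ω₀⟩ := nonempty_of_prob P
  have hable : a ≤ b := le_trans (hab (X 0 ω₀) (X 0 ω₀)).1 (hab _ _).2
  rcases eq_or_lt_of_le hable with hab' | hab'
  · -- degenerate case a = b : RHS is ofReal (exp 0) = 1
    have : ((b : ℝ) - a) ^ 2 = 0 := by rw [← hab']; ring
    rw [this, div_zero, Real.exp_zero, ENNReal.ofReal_one]
    exact prob_le_one
  -- main case
  set k : ℕ := n / 2 with hk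
  have hk1 : 1 ≤ k := by omega
  have h2k : 2 * k ≤ n := by omega
  have hkR : (0:ℝ) < (k:ℝ) := by exact_mod_cast hk1
  have hban : (0:ℝ) < b - a := sub_pos.2 hab'
  have hnpos : 0 < n := by omega
  set K : ℝ := max |a| |b| with hK
  have hK0 : 0 ≤ K := le_trans (abs_nonneg a) (le_max_left _ _)
  have habsh : ∀ x y, |h x y| ≤ K := fun x y => abs_le_K (hab x y).1 (hab x y).2
  -- slot positions
  set pos : ℕ → Fin n := fun m => ⟨m % n, Nat.mod_lt _ hnpos⟩ with hpos
  have hposval : ∀ m, m < n → ((pos m : Fin n) : ℕ) = m := fun m hm => Nat.mod_eq_of_lt hm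
  have hposinj : ∀ m m', m < n → m' < n → m ≠ m' → pos m ≠ pos m' := by
    intro m m' hm hm' hne hcon
    apply hne
    have := congrArg Fin.val hcon
    rwa [hposval m hm, hposval m' hm'] at this
  -- per-permutation block index functions
  set pf : Equiv.Perm (Fin n) → ℕ → ℕ := fun σ i => ((σ (pos (2*i)) : Fin n) : ℕ) with hpf
  set qf : Equiv.Perm (Fin n) → ℕ → ℕ := fun σ i => ((σ (pos (2*i+1)) : Fin n) : ℕ) with hqf
  have hslots : ∀ i, i < k → 2*i < n ∧ 2*i+1 < n := by intro i hi; omega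
  have hblockdisj : ∀ σ : Equiv.Perm (Fin n), ∀ i < k, ∀ j < k, i ≠ j →
      pf σ i ≠ pf σ j ∧ pf σ i ≠ qf σ j ∧ qf σ i ≠ pf σ j ∧ qf σ i ≠ qf σ j := by
    intro σ i hi j hj hij
    have hvne : ∀ m m', m < n → m' < n → m ≠ m' →
        ((σ (pos m) : Fin n) : ℕ) ≠ ((σ (pos m') : Fin n) : ℕ) := by
      intro m m' hm hm' hne hcon
      exact hposinj m m' hm hm' hne (σ.injective (Fin.val_injective hcon))
    obtain ⟨hi1, hi2⟩ := hslots i hi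
    obtain ⟨hj1, hj2⟩ := hslots j hj
    refine ⟨hvne _ _ hi1 hj1 (by omega), hvne _ _ hi1 hj2 (by omega),
      hvne _ _ hi2 hj1 (by omega), hvne _ _ hi2 hj2 (by omega)⟩
  have hinblock : ∀ σ : Equiv.Perm (Fin n), ∀ i < k, pf σ i ≠ qf σ i := by
    intro σ i hi
    obtain ⟨hi1, hi2⟩ := hslots i hi
    intro hcon
    have := σ.injective (Fin.val_injective hcon)
    exact hposinj _ _ hi1 hi2 (by omega) this
  -- definitions
  set T : Ω → ℝ := fun ω => ∑ j ∈ Finset.range n, ∑ i ∈ Finset.range j, h (X i ω) (X j ω)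
    with hT
  set Z : Ω → ℝ := fun ω => (1 / (n.choose 2 : ℝ)) * T ω - θ with hZ
  set S : Equiv.Perm (Fin n) → Ω → ℝ := fun σ ω =>
    ∑ i ∈ Finset.range k, h (X (pf σ i) ω) (X (qf σ i) ω) with hS
  set W : Equiv.Perm (Fin n) → Ω → ℝ := fun σ ω => (1 / (k:ℝ)) * S σ ω - θ with hW
  set t : ℝ := 4 * k * u / (b - a) ^ 2 with ht
  have ht0 : 0 < t := by
    rw [ht]; positivity
  -- measurability
  have hTm : Measurable T := by
    rw [hT]
    apply Finset.measurable_sum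
    intro j _
    apply Finset.measurable_sum
    intro i _
    exact measurable_h_comp hhm (hXm i) (hXm j)
  have hZm : Measurable Z := ((hTm.const_mul _).sub_const θ).comp measurable_id |>.comp measurable_id
  have hSm : ∀ σ, Measurable (S σ) := by
    intro σ
    rw [hS]
    apply Finset.measurable_sum
    intro i _
    exact measurable_h_comp hhm (hXm _) (hXm _)
  have hWm : ∀ σ, Measurable (W σ) := fun σ => ((hSm σ).const_mul _).sub_const θ
  -- bound each  ∫ exp (t * W σ) ≤ M
  set M : ℝ := Real.exp (t ^ 2 * (b - a) ^ 2 / (8 * k)) with hM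
  have hWbound : ∀ σ : Equiv.Perm (Fin n), ∫ ω, Real.exp (t * W σ ω) ∂P ≤ M := by
    intro σ
    have hmean : ∀ i ∈ Finset.range k,
        ∫ ω, h (X (pf σ i) ω) (X (qf σ i) ω) ∂P = θ := by
      intro i hi
      rw [Finset.mem_range] at hi
      rw [mean_h_eq P X hXm hindep ν hid h hhm a b hab _ _ (hinblock σ i hi)]
      exact hθ.symm
    have hmgfY : ∀ i ∈ Finset.range k, ∀ s : ℝ,
        mgf (fun ω => h (X (pf σ i) ω) (X (qf σ i) ω)) P s
          ≤ Real.exp (s * θ + s ^ 2 * (b - a) ^ 2 / 8) := by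
      intro i hi s
      have := hoeffding_lemma P (measurable_h_comp hhm (hXm _) (hXm _))
        (fun ω => hab (X (pf σ i) ω) (X (qf σ i) ω)) s
      rwa [hmean i hi] at this
    have hmgfS : mgf (S σ) P (t / k) = ∏ i ∈ Finset.range k,
        mgf (fun ω => h (X (pf σ i) ω) (X (qf σ i) ω)) P (t / k) := by
      rw [hS]
      exact mgf_sum_blocks P X hXm hindep h hhm (pf σ) (qf σ) k
        (fun i hi j hj hij => hblockdisj σ i hi j hj hij) (t / k)
    have hprodle : ∏ i ∈ Finset.range k,
        mgf (fun ω => h (X (pf σ i) ω) (X (qf σ i) ω)) P (t / k)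
          ≤ Real.exp (k * ((t/k) * θ + (t/k) ^ 2 * (b - a) ^ 2 / 8)) := by
      calc ∏ i ∈ Finset.range k, mgf (fun ω => h (X (pf σ i) ω) (X (qf σ i) ω)) P (t / k)
          ≤ ∏ _i ∈ Finset.range k, Real.exp ((t/k) * θ + (t/k) ^ 2 * (b - a) ^ 2 / 8) :=
            Finset.prod_le_prod (fun i _ => mgf_nonneg) (fun i hi => hmgfY i hi (t/k))
        _ = Real.exp (k * ((t/k) * θ + (t/k) ^ 2 * (b - a) ^ 2 / 8)) := by
            rw [Finset.prod_const, Finset.card_range, ← Real.exp_nat_mul]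
    -- ∫ exp (t * W σ) = exp (- t θ) * mgf (S σ) (t/k)
    have hexpand : ∀ ω, Real.exp (t * W σ ω)
        = Real.exp ((t / k) * S σ ω) * Real.exp (-(t * θ)) := by
      intro ω
      rw [← Real.exp_add]
      congr 1
      rw [hW]
      field_simp
      ring
    have hintS : Integrable (fun ω => Real.exp ((t/k) * S σ ω)) P := by
      apply integrable_of_abs_le (Real.measurable_exp.comp ((hSm σ).const_mul _)
        |>.aestronglyMeasurable) (Real.exp (|t/k| * (k * K)))
      intro ω
      simp only [Function.comp_apply, Real.abs_exp]
      apply Real.exp_le_exp.mpr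
      calc (t/k) * S σ ω ≤ |(t/k) * S σ ω| := le_abs_self _
        _ = |t/k| * |S σ ω| := abs_mul _ _
        _ ≤ |t/k| * (k * K) := by
            apply mul_le_mul_of_nonneg_left _ (abs_nonneg _)
            rw [hS]
            calc |∑ i ∈ Finset.range k, h (X (pf σ i) ω) (X (qf σ i) ω)|
                ≤ ∑ i ∈ Finset.range k, |h (X (pf σ i) ω) (X (qf σ i) ω)| :=
                  Finset.abs_sum_le_sum_abs _ _
              _ ≤ ∑ _i ∈ Finset.range k, K := Finset.sum_le_sum (fun i _ => habsh _ _)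
              _ = k * K := by rw [Finset.sum_const, Finset.card_range, nsmul_eq_mul]
    calc ∫ ω, Real.exp (t * W σ ω) ∂P
        = ∫ ω, Real.exp ((t/k) * S σ ω) * Real.exp (-(t * θ)) ∂P := by
          apply integral_congr_ae (ae_of_all _ (fun ω => hexpand ω))
      _ = (∫ ω, Real.exp ((t/k) * S σ ω) ∂P) * Real.exp (-(t * θ)) :=
          integral_mul_const _ _
      _ = mgf (S σ) P (t / k) * Real.exp (-(t * θ)) := by rfl
      _ ≤ Real.exp (k * ((t/k) * θ + (t/k) ^ 2 * (b - a) ^ 2 / 8)) * Real.exp (-(t * θ)) := by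
          apply mul_le_mul_of_nonneg_right _ (Real.exp_pos _).le
          rw [hmgfS]
          exact hprodle
      _ = M := by
          rw [← Real.exp_add, hM]
          congr 1
          field_simp
          ring
  -- combinatorial identity : Z = (1/n!) ∑ σ, W σ
  obtain ⟨N, hNcount, hNsum⟩ := perm_pair_sum n hn
  have hNR : (N : ℝ) * (n * (n-1) : ℕ) = (n.factorial : ℝ) := by
    exact_mod_cast congrArg (fun x : ℕ => (x : ℝ)) hNcount
  have hfacpos : (0:ℝ) < (n.factorial : ℝ) := by exact_mod_cast n.factorial_pos
  have hCpos : (0:ℝ) < (n.choose 2 : ℝ) := by exact_mod_cast Nat.choose_pos hn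
  have h2C : 2 * n.choose 2 = n * (n - 1) := by
    rw [Nat.choose_two_right]
    apply Nat.mul_div_cancel'
    have heven : Even ((n - 1) * ((n - 1) + 1)) := Nat.even_mul_succ_self (n - 1)
    have hrw : (n - 1) + 1 = n := by omega
    rw [hrw] at heven
    rw [mul_comm]
    exact heven.two_dvd
  have hcast : 2 * (N:ℝ) * (n.choose 2 : ℝ) = (n.factorial : ℝ) := by
    have hnat : N * (2 * n.choose 2) = n.factorial := by rw [h2C]; exact hNcount
    have := congrArg (fun x : ℕ => (x:ℝ)) hnat
    push_cast at this
    linarith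
  -- pointwise combinatorial identity
  have hsumW : ∀ ω, ∑ σ : Equiv.Perm (Fin n), W σ ω = (n.factorial : ℝ) * Z ω := by
    intro ω
    have hsumS : ∑ σ : Equiv.Perm (Fin n), S σ ω = (k : ℝ) * ((N:ℝ) * (2 * T ω)) := by
      simp only [hS]
      rw [Finset.sum_comm]
      have hcongr : ∀ i ∈ Finset.range k,
          ∑ σ : Equiv.Perm (Fin n), h (X (pf σ i) ω) (X (qf σ i) ω)
            = (N:ℝ) * (2 * T ω) := by
        intro i hi
        rw [Finset.mem_range] at hi
        obtain ⟨h1, h2⟩ := hslots i hi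
        have hne := hposinj _ _ h1 h2 (by omega)
        have hstep := hNsum (pos (2*i)) (pos (2*i+1)) hne
          (fun p q => h (X ↑p ω) (X ↑q ω))
        simp only [hpf, hqf]
        rw [hstep]
        congr 1
        rw [hT]
        exact offDiag_sum_eq n (fun i j => h (X i ω) (X j ω)) (fun i j => hsymm _ _)
      rw [Finset.sum_congr rfl hcongr, Finset.sum_const, Finset.card_range, nsmul_eq_mul]
    have hcardperm : ((Finset.univ : Finset (Equiv.Perm (Fin n))).card : ℝ)
        = (n.factorial : ℝ) := by
      rw [Finset.card_univ, Fintype.card_perm, Fintype.card_fin]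
    calc ∑ σ : Equiv.Perm (Fin n), W σ ω
        = ∑ σ : Equiv.Perm (Fin n), ((1 / (k:ℝ)) * S σ ω - θ) := rfl
      _ = (1 / (k:ℝ)) * (∑ σ : Equiv.Perm (Fin n), S σ ω)
          - ((Finset.univ : Finset (Equiv.Perm (Fin n))).card : ℝ) * θ := by
          rw [Finset.sum_sub_distrib, ← Finset.mul_sum, Finset.sum_const, nsmul_eq_mul]
      _ = 2 * (N:ℝ) * T ω - (n.factorial : ℝ) * θ := by
          rw [hsumS, hcardperm]
          field_simp
      _ = (n.factorial : ℝ) * Z ω := by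
          rw [hZ]
          simp only
          rw [← hcast]
          field_simp
  -- Jensen
  have hfne : ((n.factorial : ℝ)) ≠ 0 := ne_of_gt hfacpos
  have hjensen : ∀ ω, Real.exp (t * Z ω)
      ≤ ∑ σ : Equiv.Perm (Fin n), (1/(n.factorial:ℝ)) * Real.exp (t * W σ ω) := by
    intro ω
    have hwsum : ∑ _σ : Equiv.Perm (Fin n), (1/(n.factorial:ℝ)) = 1 := by
      rw [Finset.sum_const, Finset.card_univ, Fintype.card_perm, Fintype.card_fin,
        nsmul_eq_mul]
      field_simp
    have hjen := convexOn_exp.map_sum_le (t := Finset.univ)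
      (w := fun _ : Equiv.Perm (Fin n) => 1/(n.factorial:ℝ))
      (p := fun σ => t * W σ ω)
      (fun _ _ => by positivity) hwsum (fun _ _ => Set.mem_univ _)
    have harg : ∑ σ : Equiv.Perm (Fin n), (1/(n.factorial:ℝ)) • (t * W σ ω)
        = t * Z ω := by
      simp only [smul_eq_mul]
      calc ∑ σ : Equiv.Perm (Fin n), (1/(n.factorial:ℝ)) * (t * W σ ω)
          = (1/(n.factorial:ℝ)) * (t * ∑ σ : Equiv.Perm (Fin n), W σ ω) := by
            rw [← Finset.mul_sum, ← Finset.mul_sum]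
        _ = t * Z ω := by rw [hsumW ω]; field_simp
    rw [harg] at hjen
    simpa [smul_eq_mul] using hjen
  -- integrability
  have hWabs : ∀ σ, ∀ ω, |W σ ω| ≤ K + |θ| := by
    intro σ ω
    rw [hW]
    simp only
    apply le_trans (abs_sub _ _)
    gcongr
    · rw [abs_mul]
      have hSb : |S σ ω| ≤ (k:ℝ) * K := by
        rw [hS]
        calc |∑ i ∈ Finset.range k, h (X (pf σ i) ω) (X (qf σ i) ω)|
            ≤ ∑ i ∈ Finset.range k, |h (X (pf σ i) ω) (X (qf σ i) ω)| :=
              Finset.abs_sum_le_sum_abs _ _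
          _ ≤ ∑ _i ∈ Finset.range k, K := Finset.sum_le_sum (fun i _ => habsh _ _)
          _ = (k:ℝ) * K := by rw [Finset.sum_const, Finset.card_range, nsmul_eq_mul]
      calc |1/(k:ℝ)| * |S σ ω| ≤ |1/(k:ℝ)| * ((k:ℝ) * K) :=
            mul_le_mul_of_nonneg_left hSb (abs_nonneg _)
        _ = K := by rw [abs_of_pos (by positivity : (0:ℝ) < 1/(k:ℝ))]; field_simp
  have hintW : ∀ σ, Integrable (fun ω => Real.exp (t * W σ ω)) P := by
    intro σ
    apply integrable_of_abs_le
      (Real.measurable_exp.comp ((hWm σ).const_mul t)).aestronglyMeasurable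
      (Real.exp (|t| * (K + |θ|)))
    intro ω
    simp only [Function.comp_apply, Real.abs_exp]
    apply Real.exp_le_exp.mpr
    calc t * W σ ω ≤ |t * W σ ω| := le_abs_self _
      _ = |t| * |W σ ω| := abs_mul _ _
      _ ≤ |t| * (K + |θ|) := mul_le_mul_of_nonneg_left (hWabs σ ω) (abs_nonneg _)
  have hZabs : ∀ ω, |Z ω| ≤ |1/(n.choose 2:ℝ)| * ((n:ℝ) * ((n:ℝ) * K)) + |θ| := by
    intro ω
    rw [hZ]
    simp only
    apply le_trans (abs_sub _ _)
    gcongr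
    rw [abs_mul]
    apply mul_le_mul_of_nonneg_left _ (abs_nonneg _)
    rw [hT]
    calc |∑ j ∈ Finset.range n, ∑ i ∈ Finset.range j, h (X i ω) (X j ω)|
        ≤ ∑ j ∈ Finset.range n, |∑ i ∈ Finset.range j, h (X i ω) (X j ω)| :=
          Finset.abs_sum_le_sum_abs _ _
      _ ≤ ∑ j ∈ Finset.range n, ((n:ℝ) * K) := by
          apply Finset.sum_le_sum
          intro j hj
          rw [Finset.mem_range] at hj
          calc |∑ i ∈ Finset.range j, h (X i ω) (X j ω)|
              ≤ ∑ i ∈ Finset.range j, |h (X i ω) (X j ω)| :=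
                Finset.abs_sum_le_sum_abs _ _
            _ ≤ ∑ _i ∈ Finset.range j, K := Finset.sum_le_sum (fun i _ => habsh _ _)
            _ = (j:ℝ) * K := by rw [Finset.sum_const, Finset.card_range, nsmul_eq_mul]
            _ ≤ (n:ℝ) * K := by
                apply mul_le_mul_of_nonneg_right _ hK0
                exact_mod_cast hj.le
      _ = (n:ℝ) * ((n:ℝ) * K) := by rw [Finset.sum_const, Finset.card_range, nsmul_eq_mul]
  have hintZ : Integrable (fun ω => Real.exp (t * Z ω)) P := by
    apply integrable_of_abs_le
      (Real.measurable_exp.comp (hZm.const_mul t)).aestronglyMeasurable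
      (Real.exp (|t| * (|1/(n.choose 2:ℝ)| * ((n:ℝ) * ((n:ℝ) * K)) + |θ|)))
    intro ω
    simp only [Function.comp_apply, Real.abs_exp]
    apply Real.exp_le_exp.mpr
    calc t * Z ω ≤ |t * Z ω| := le_abs_self _
      _ = |t| * |Z ω| := abs_mul _ _
      _ ≤ |t| * (|1/(n.choose 2:ℝ)| * ((n:ℝ) * ((n:ℝ) * K)) + |θ|) :=
          mul_le_mul_of_nonneg_left (hZabs ω) (abs_nonneg _)
  -- mgf bound for Z
  have hmgfZ : mgf Z P t ≤ M := by
    have hrfl : mgf Z P t = ∫ ω, Real.exp (t * Z ω) ∂P := rfl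
    rw [hrfl]
    have hintsum : Integrable (fun ω => ∑ σ : Equiv.Perm (Fin n),
        (1/(n.factorial:ℝ)) * Real.exp (t * W σ ω)) P := by
      apply integrable_finset_sum
      intro σ _
      exact (hintW σ).const_mul _
    calc ∫ ω, Real.exp (t * Z ω) ∂P
        ≤ ∫ ω, ∑ σ : Equiv.Perm (Fin n), (1/(n.factorial:ℝ)) * Real.exp (t * W σ ω) ∂P :=
          integral_mono hintZ hintsum hjensen
      _ = ∑ σ : Equiv.Perm (Fin n), (1/(n.factorial:ℝ)) * ∫ ω, Real.exp (t * W σ ω) ∂P := by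
          rw [integral_finset_sum _ (fun σ _ => (hintW σ).const_mul _)]
          exact Finset.sum_congr rfl (fun σ _ => integral_const_mul _ _)
      _ ≤ ∑ _σ : Equiv.Perm (Fin n), (1/(n.factorial:ℝ)) * M := by
          apply Finset.sum_le_sum
          intro σ _
          exact mul_le_mul_of_nonneg_left (hWbound σ) (by positivity)
      _ = M := by
          rw [Finset.sum_const, Finset.card_univ, Fintype.card_perm, Fintype.card_fin,
            nsmul_eq_mul]
          field_simp
  -- Chernoff
  have hch := measure_ge_le_exp_mul_mgf (X := Z) (μ := P) (t := t) u ht0.le hintZ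
  have hexpo : Real.exp (-t * u) * M = Real.exp (-2 * (k:ℝ) * u ^ 2 / (b - a) ^ 2) := by
    rw [hM, ← Real.exp_add]
    congr 1
    rw [ht]
    field_simp
    ring
  have hfinal : (P {ω | u ≤ Z ω}).toReal
      ≤ Real.exp (-2 * (k:ℝ) * u ^ 2 / (b - a) ^ 2) := by
    calc (P {ω | u ≤ Z ω}).toReal ≤ Real.exp (-t * u) * mgf Z P t := hch
      _ ≤ Real.exp (-t * u) * M := mul_le_mul_of_nonneg_left hmgfZ (Real.exp_pos _).le
      _ = _ := hexpo
  have hsetZ : {ω | u ≤ (1 / (n.choose 2 : ℝ)) *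
      (∑ j ∈ Finset.range n, ∑ i ∈ Finset.range j, h (X i ω) (X j ω)) - θ}
      = {ω | u ≤ Z ω} := by
    rw [hZ, hT]
  rw [hsetZ, ← ENNReal.ofReal_toReal (measure_ne_top P _)]
  exact ENNReal.ofReal_le_ofReal hfinal

open Real Finset in
/-- Hoeffding's inequality for U-statistics of order 2: for i.i.d. `X₁,…,Xₙ` and a bounded
symmetric core `h` with `a ≤ h ≤ b`, `θ = E[h(X₁,X₂)]` and
`Uₙ = (1/C(n,2)) ∑_{i<j} h(Xᵢ,Xⱼ)`, one has
`P(Uₙ − θ ≥ u) ≤ exp(−2⌊n/2⌋u²/(b−a)²)` and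
`P(|Uₙ − θ| ≥ u) ≤ 2 exp(−2⌊n/2⌋u²/(b−a)²)`. -/
theorem hoeffding_ustat_order_two
    {Ω E : Type*} [MeasurableSpace Ω] [MeasurableSpace E]
    (P : Measure Ω) [IsProbabilityMeasure P]
    (X : ℕ → Ω → E) (hXm : ∀ i, Measurable (X i))
    (hindep : iIndepFun X P)
    (ν : Measure E) (hid : ∀ i, P.map (X i) = ν)
    (h : E → E → ℝ) (hhm : Measurable (Function.uncurry h))
    (hsymm : ∀ x y, h x y = h y x)
    (a b : ℝ) (hab : ∀ x y, a ≤ h x y ∧ h x y ≤ b)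
    (θ : ℝ) (hθ : θ = ∫ x, ∫ y, h x y ∂ν ∂ν)
    (n : ℕ) (hn : 2 ≤ n) (u : ℝ) (hu : 0 < u) :
    P {ω | u ≤ (1 / (n.choose 2 : ℝ)) *
          (∑ j ∈ Finset.range n, ∑ i ∈ Finset.range j, h (X i ω) (X j ω)) - θ}
      ≤ ENNReal.ofReal (Real.exp (-2 * ((n / 2 : ℕ) : ℝ) * u ^ 2 / (b - a) ^ 2)) ∧
    P {ω | u ≤ |(1 / (n.choose 2 : ℝ)) *
          (∑ j ∈ Finset.range n, ∑ i ∈ Finset.range j, h (X i ω) (X j ω)) - θ|}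
      ≤ 2 * ENNReal.ofReal (Real.exp (-2 * ((n / 2 : ℕ) : ℝ) * u ^ 2 / (b - a) ^ 2)) := by
  have h1 := hoeffding_ustat_onesided P X hXm hindep ν hid h hhm hsymm a b hab θ hθ n hn u hu
  refine ⟨h1, ?_⟩
  -- apply the one-sided bound to -h
  have hhm' : Measurable (Function.uncurry (fun x y => -(h x y))) := hhm.neg
  have hsymm' : ∀ x y, -(h x y) = -(h y x) := fun x y => by rw [hsymm]
  have hab' : ∀ x y, -b ≤ -(h x y) ∧ -(h x y) ≤ -a := fun x y =>
    ⟨neg_le_neg (hab x y).2, neg_le_neg (hab x y).1⟩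
  have hθ' : -θ = ∫ x, ∫ y, -(h x y) ∂ν ∂ν := by
    rw [hθ]
    simp [integral_neg]
  have h2 := hoeffding_ustat_onesided P X hXm hindep ν hid (fun x y => -(h x y)) hhm'
    hsymm' (-b) (-a) hab' (-θ) hθ' n hn u hu
  have hptws : ∀ ω, (1 / (n.choose 2 : ℝ)) *
      (∑ j ∈ Finset.range n, ∑ i ∈ Finset.range j, -(h (X i ω) (X j ω))) - (-θ)
      = -((1 / (n.choose 2 : ℝ)) *
        (∑ j ∈ Finset.range n, ∑ i ∈ Finset.range j, h (X i ω) (X j ω)) - θ) := by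
    intro ω
    rw [show (∑ j ∈ Finset.range n, ∑ i ∈ Finset.range j, -(h (X i ω) (X j ω)))
      = -(∑ j ∈ Finset.range n, ∑ i ∈ Finset.range j, h (X i ω) (X j ω)) by
        rw [← Finset.sum_neg_distrib]
        exact Finset.sum_congr rfl (fun j _ => by rw [← Finset.sum_neg_distrib])]
    ring
  have hexpo : (-a - -b : ℝ) = b - a := by ring
  rw [hexpo] at h2
  have hset2 : {ω | u ≤ (1 / (n.choose 2 : ℝ)) *
      (∑ j ∈ Finset.range n, ∑ i ∈ Finset.range j, -(h (X i ω) (X j ω))) - (-θ)}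
      = {ω | u ≤ -((1 / (n.choose 2 : ℝ)) *
        (∑ j ∈ Finset.range n, ∑ i ∈ Finset.range j, h (X i ω) (X j ω)) - θ)} := by
    ext ω
    rw [Set.mem_setOf_eq, Set.mem_setOf_eq, hptws ω]
  rw [hset2] at h2
  have hsub : {ω | u ≤ |(1 / (n.choose 2 : ℝ)) *
      (∑ j ∈ Finset.range n, ∑ i ∈ Finset.range j, h (X i ω) (X j ω)) - θ|}
      ⊆ {ω | u ≤ (1 / (n.choose 2 : ℝ)) *
          (∑ j ∈ Finset.range n, ∑ i ∈ Finset.range j, h (X i ω) (X j ω)) - θ}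
        ∪ {ω | u ≤ -((1 / (n.choose 2 : ℝ)) *
          (∑ j ∈ Finset.range n, ∑ i ∈ Finset.range j, h (X i ω) (X j ω)) - θ)} := by
    intro ω hω
    rw [Set.mem_setOf_eq] at hω
    rcases le_abs.mp hω with hc | hc
    · exact Or.inl hc
    · exact Or.inr hc
  calc P {ω | u ≤ |(1 / (n.choose 2 : ℝ)) *
        (∑ j ∈ Finset.range n, ∑ i ∈ Finset.range j, h (X i ω) (X j ω)) - θ|}
      ≤ P ({ω | u ≤ (1 / (n.choose 2 : ℝ)) *
          (∑ j ∈ Finset.range n, ∑ i ∈ Finset.range j, h (X i ω) (X j ω)) - θ}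
        ∪ {ω | u ≤ -((1 / (n.choose 2 : ℝ)) *
          (∑ j ∈ Finset.range n, ∑ i ∈ Finset.range j, h (X i ω) (X j ω)) - θ)}) :=
        measure_mono hsub
    _ ≤ P {ω | u ≤ (1 / (n.choose 2 : ℝ)) *
          (∑ j ∈ Finset.range n, ∑ i ∈ Finset.range j, h (X i ω) (X j ω)) - θ}
        + P {ω | u ≤ -((1 / (n.choose 2 : ℝ)) *
          (∑ j ∈ Finset.range n, ∑ i ∈ Finset.range j, h (X i ω) (X j ω)) - θ)} :=
        measure_union_le _ _
    _ ≤ ENNReal.ofReal (Real.exp (-2 * ((n / 2 : ℕ) : ℝ) * u ^ 2 / (b - a) ^ 2))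
        + ENNReal.ofReal (Real.exp (-2 * ((n / 2 : ℕ) : ℝ) * u ^ 2 / (b - a) ^ 2)) :=
        add_le_add h1 h2
    _ = 2 * ENNReal.ofReal (Real.exp (-2 * ((n / 2 : ℕ) : ℝ) * u ^ 2 / (b - a) ^ 2)) := by
        rw [two_mul]
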